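/- Let n ≥ 1, let Σ = σ²·I + τ²·𝟙𝟙ᵀ be an exchangeable n×n real covariance matrix (𝟙 the all-ones vector), let Ω = ω²·I, and let B be an n×n real matrix satisfying the discrete Lyapunov equation Σ = B·Σ·Bᵀ + Ω. Then for every n×n permutation matrix P, the conjugated matrix B' = P·B·Pᵀ also satisfies Σ = B'·Σ·B'ᵀ + Ω. Hence the Lyapunov equation does not distinguish B from any of its permutation conjugates. -/
import Mathlib


open Matrix

lemma permMatrix_transpose' {n : ℕ} (f : Equiv.Perm (Fin n)) :
    (f.permMatrix ℝ)ᵀ = (f⁻¹).permMatrix ℝ := by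
  show (f.toPEquiv.toMatrix)ᵀ = ((f⁻¹ : Equiv.Perm (Fin n)).toPEquiv.toMatrix)
  rw [← PEquiv.toMatrix_symm, ← Equiv.toPEquiv_symm]
  rfl

lemma permMatrix_conj' {n : ℕ} (f : Equiv.Perm (Fin n))
    (M : Matrix (Fin n) (Fin n) ℝ) :
    (f.permMatrix ℝ) * M * (f.permMatrix ℝ)ᵀ = M.submatrix f f := by
  rw [permMatrix_transpose']
  show f.toPEquiv.toMatrix * M * (f⁻¹ : Equiv.Perm (Fin n)).toPEquiv.toMatrix
      = M.submatrix f f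
  rw [PEquiv.toMatrix_toPEquiv_mul, PEquiv.mul_toMatrix_toPEquiv]
  ext i j
  simp [Matrix.submatrix_apply, Equiv.Perm.inv_def]

/-- With exchangeable stationary covariance `S = σ²•I + τ²•𝟙𝟙ᵀ` and shock
covariance `Ω = ω²•I`, if `B` solves the discrete Lyapunov equation
`S = B S Bᵀ + Ω`, then so does every permutation conjugate `P B Pᵀ`. -/
theorem lyapunov_permutation_non_identification
    (n : ℕ) (hn : 1 ≤ n) (σ2 τ2 ω2 : ℝ)
    (B : Matrix (Fin n) (Fin n) ℝ)
    (S : Matrix (Fin n) (Fin n) ℝ)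
    (hS : S = σ2 • (1 : Matrix (Fin n) (Fin n) ℝ) +
        τ2 • (Matrix.of fun _ _ : Fin n => (1 : ℝ)))
    (Ω : Matrix (Fin n) (Fin n) ℝ)
    (hΩ : Ω = ω2 • (1 : Matrix (Fin n) (Fin n) ℝ))
    (hB : S = B * S * Bᵀ + Ω) :
    ∀ e : Equiv.Perm (Fin n),
      S = ((e.permMatrix ℝ) * B * (e.permMatrix ℝ)ᵀ) * S *
            ((e.permMatrix ℝ) * B * (e.permMatrix ℝ)ᵀ)ᵀ + Ω := by
  intro e
  have hexch : ∀ (f : Equiv.Perm (Fin n)),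
      (f.permMatrix ℝ) * S * (f.permMatrix ℝ)ᵀ = S := by
    intro f
    rw [permMatrix_conj', hS]
    ext i j
    simp [Matrix.submatrix_apply, Matrix.one_apply, f.injective.eq_iff]
  have hexchΩ : ∀ (f : Equiv.Perm (Fin n)),
      (f.permMatrix ℝ) * (S - Ω) * (f.permMatrix ℝ)ᵀ = S - Ω := by
    intro f
    rw [permMatrix_conj', hS, hΩ]
    ext i j
    simp [Matrix.submatrix_apply, Matrix.one_apply, f.injective.eq_iff]
  set P := e.permMatrix ℝ with hP
  have hPinv : Pᵀ * S * P = S := by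
    have := hexch e⁻¹
    rwa [permMatrix_transpose' e⁻¹, inv_inv, ← hP, ← permMatrix_transpose' e,
      ← hP] at this
  have h3 : ∀ X, Pᵀ * (S * (P * X)) = S * X := by
    intro X
    rw [← Matrix.mul_assoc, ← Matrix.mul_assoc, hPinv]
  have calc1 : (P * B * Pᵀ) * S * (P * B * Pᵀ)ᵀ = P * (B * S * Bᵀ) * Pᵀ := by
    simp only [Matrix.transpose_mul, Matrix.transpose_transpose,
      Matrix.mul_assoc]
    rw [h3 (Bᵀ * Pᵀ)]
  have hBSB : B * S * Bᵀ = S - Ω := eq_sub_of_add_eq hB.symm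
  rw [calc1, hBSB, hexchΩ e]
  abel
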